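/- There exists a natural number a such that every entry of the matrix (σ^(ℓ^a) − 1)^n, computed in the matrix ring over S, lies in the ideal I; equivalently, the image of σ^(ℓ^a) in GL_n(R_{q,n}) = GL_n(S/I) is unipotent. -/

import Mathlib

set_option linter.unusedSectionVars false
open MvPolynomial Matrix

noncomputable section

/-- Index type for the `2n²` variables: left summand for the entries of `Fr`,
right summand for the entries of `σ`. -/
abbrev MatVar (n : ℕ) : Type := (Fin n × Fin n) ⊕ (Fin n × Fin n)

variable (W : Type) [CommRing W] (n q : ℕ)

/-- The universal matrix `Fr` of indeterminates. -/
def frPoly : Matrix (Fin n) (Fin n) (MvPolynomial (MatVar n) W) :=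
  Matrix.of fun i j => X (Sum.inl (i, j))

/-- The universal matrix `σ` of indeterminates. -/
def sigPoly : Matrix (Fin n) (Fin n) (MvPolynomial (MatVar n) W) :=
  Matrix.of fun i j => X (Sum.inr (i, j))

/-- The element `det Fr · det σ` at which we localize. -/
def detElt : MvPolynomial (MatVar n) W := (frPoly W n).det * (sigPoly W n).det

/-- The localization of the polynomial ring at `det Fr · det σ`. -/
abbrev LocS : Type := Localization.Away (detElt W n)

/-- The matrix `Fr` over the localization. -/
def frLoc : Matrix (Fin n) (Fin n) (LocS W n) :=
  (frPoly W n).map (algebraMap (MvPolynomial (MatVar n) W) (LocS W n))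

/-- The matrix `σ` over the localization. -/
def sigLoc : Matrix (Fin n) (Fin n) (LocS W n) :=
  (sigPoly W n).map (algebraMap (MvPolynomial (MatVar n) W) (LocS W n))

/-- The ideal generated by the `n²` entries of `Fr·σ − σ^q·Fr`. -/
def relIdeal : Ideal (LocS W n) :=
  Ideal.span {x | ∃ i j, x = (frLoc W n * sigLoc W n - sigLoc W n ^ q * frLoc W n) i j}

/-- The ring `S = S_{q,n}`: the polynomial ring over `W` in the `2n²` matrix entries,
localized at `det Fr · det σ`, modulo the `n²` entries of `Fr·σ − σ^q·Fr`. -/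
def Sring : Type := LocS W n ⧸ relIdeal W n q

instance : CommRing (Sring W n q) := Ideal.Quotient.commRing _

instance : Algebra W (Sring W n q) := Ideal.Quotient.algebra _

/-- The universal matrix `Fr` over `S`. -/
def frS : Matrix (Fin n) (Fin n) (Sring W n q) :=
  (frLoc W n).map (Ideal.Quotient.mk (relIdeal W n q))

/-- The universal matrix `σ` over `S`. -/
def sigS : Matrix (Fin n) (Fin n) (Sring W n q) :=
  (sigLoc W n).map (Ideal.Quotient.mk (relIdeal W n q))

/-! The distinguished point `x₀`, its connected component `X⁰`, and the ideal `I`. -/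

variable (l : ℕ) [Fact l.Prime] (k : Type) [Field k] [IsAlgClosed k] [CharP k l]

/-- The Witt vectors `W(k)`. -/
abbrev Wk : Type := WittVector l k

/-- The canonical residue homomorphism `W(k) → k`, `w ↦ w₀`. -/
def resHom : Wk l k →+* k := WittVector.ghostComponent 0

/-- `k` as a `W(k)`-algebra via the residue map. -/
instance : Algebra (Wk l k) k := (resHom l k).toAlgebra

/-- The point with both matrices equal to the identity. -/
def diagVal : MatVar n → k := fun v =>
  Sum.elim (fun ij => if ij.1 = ij.2 then (1 : k) else 0)
    (fun ij => if ij.1 = ij.2 then (1 : k) else 0) v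

/-- Evaluation of polynomials at the identity point. -/
def evalPoly : MvPolynomial (MatVar n) (Wk l k) →ₐ[Wk l k] k := aeval (diagVal n k)

lemma frPoly_eval : (frPoly (Wk l k) n).map (evalPoly n l k) = 1 := by
  ext i j
  simp [frPoly, evalPoly, diagVal, Matrix.one_apply, Matrix.map_apply]

lemma sigPoly_eval : (sigPoly (Wk l k) n).map (evalPoly n l k) = 1 := by
  ext i j
  simp [sigPoly, evalPoly, diagVal, Matrix.one_apply, Matrix.map_apply]

lemma isUnit_eval_detElt : IsUnit (evalPoly n l k (detElt (Wk l k) n)) := by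
  have h1 : (evalPoly n l k) ((frPoly (Wk l k) n).det) = 1 := by
    rw [AlgHom.map_det, AlgHom.mapMatrix_apply, frPoly_eval, Matrix.det_one]
  have h2 : (evalPoly n l k) ((sigPoly (Wk l k) n).det) = 1 := by
    rw [AlgHom.map_det, AlgHom.mapMatrix_apply, sigPoly_eval, Matrix.det_one]
  rw [detElt, _root_.map_mul, h1, h2, mul_one]
  exact isUnit_one

/-- Evaluation at the identity point, extended to the localization. -/
def evalLoc : LocS (Wk l k) n →+* k :=
  Localization.awayLift (evalPoly n l k).toRingHom (detElt (Wk l k) n) (isUnit_eval_detElt n l k)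

lemma evalLoc_algebraMap (x : MvPolynomial (MatVar n) (Wk l k)) :
    evalLoc n l k (algebraMap (MvPolynomial (MatVar n) (Wk l k)) (LocS (Wk l k) n) x) =
      evalPoly n l k x := by
  simp [evalLoc, Localization.awayLift, IsLocalization.Away.lift_eq]

lemma relIdeal_le_ker : relIdeal (Wk l k) n q ≤ RingHom.ker (evalLoc n l k) := by
  rw [relIdeal, Ideal.span_le]
  rintro x ⟨i, j, rfl⟩
  simp only [SetLike.mem_coe, RingHom.mem_ker]
  have hfr : (frLoc (Wk l k) n).map (evalLoc n l k) = 1 := by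
    rw [frLoc, Matrix.map_map]
    have hcomp : (evalLoc n l k) ∘
        (algebraMap (MvPolynomial (MatVar n) (Wk l k)) (LocS (Wk l k) n))
        = evalPoly n l k := by
      funext x; exact evalLoc_algebraMap n l k x
    rw [hcomp]
    exact frPoly_eval n l k
  have hsig : (sigLoc (Wk l k) n).map (evalLoc n l k) = 1 := by
    rw [sigLoc, Matrix.map_map]
    have hcomp : (evalLoc n l k) ∘
        (algebraMap (MvPolynomial (MatVar n) (Wk l k)) (LocS (Wk l k) n))
        = evalPoly n l k := by
      funext x; exact evalLoc_algebraMap n l k x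
    rw [hcomp]
    exact sigPoly_eval n l k
  have key : (frLoc (Wk l k) n * sigLoc (Wk l k) n
      - sigLoc (Wk l k) n ^ q * frLoc (Wk l k) n).map (evalLoc n l k) = 0 := by
    have h0 : (RingHom.mapMatrix (evalLoc n l k) (m := Fin n))
        (frLoc (Wk l k) n * sigLoc (Wk l k) n
          - sigLoc (Wk l k) n ^ q * frLoc (Wk l k) n) = 0 := by
      rw [map_sub, _root_.map_mul, _root_.map_mul, map_pow]
      simp only [RingHom.mapMatrix_apply]
      rw [hfr, hsig]
      simp
    simpa only [RingHom.mapMatrix_apply] using h0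
  calc (evalLoc n l k) ((frLoc (Wk l k) n * sigLoc (Wk l k) n
      - sigLoc (Wk l k) n ^ q * frLoc (Wk l k) n) i j)
      = ((frLoc (Wk l k) n * sigLoc (Wk l k) n
      - sigLoc (Wk l k) n ^ q * frLoc (Wk l k) n).map (evalLoc n l k)) i j := rfl
    _ = 0 := by rw [key]; rfl

/-- Evaluation at the identity point, as a homomorphism `S → k`. -/
def evalS : Sring (Wk l k) n q →+* k :=
  Ideal.Quotient.lift (relIdeal (Wk l k) n q) (evalLoc n l k)
    (fun _ ha => RingHom.mem_ker.mp (relIdeal_le_ker n q l k ha))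

/-- The point `x₀` of `Spec S`: the kernel of the evaluation sending `Fr` and `σ`
to the identity matrix. -/
def x0 : PrimeSpectrum (Sring (Wk l k) n q) :=
  ⟨RingHom.ker (evalS n q l k), RingHom.ker_isPrime _⟩

/-- The connected component `X⁰` of `x₀` in `Spec S`. -/
def Xcomp : Set (PrimeSpectrum (Sring (Wk l k) n q)) := connectedComponent (x0 n q l k)

/-- The ideal `I`: the intersection of all primes belonging to `X⁰`. -/
def Iideal : Ideal (Sring (Wk l k) n q) :=
  ⨅ (P : PrimeSpectrum (Sring (Wk l k) n q)) (_ : P ∈ Xcomp n q l k), P.asIdeal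


section MyAux
variable {K : Type*} [Field K] {N : ℕ}

lemma my_eval_charpoly (M : Matrix (Fin N) (Fin N) K) (z : K) :
    M.charpoly.eval z = (z • (1 : Matrix (Fin N) (Fin N) K) - M).det := by
  rw [Matrix.charpoly, ← Polynomial.coe_evalRingHom, RingHom.map_det]
  congr 1
  ext i j
  rcases eq_or_ne i j with rfl | h
  · simp [Matrix.charmatrix_apply_eq, Matrix.one_apply]
  · simp [Matrix.charmatrix_apply_ne _ _ _ h, Matrix.one_apply_ne h]

lemma my_det_aeval_prod (A : Matrix (Fin N) (Fin N) K) (μ : Multiset K) :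
    ((Polynomial.aeval A) (μ.map (fun z : K => Polynomial.X - Polynomial.C z)).prod).det
      = (μ.map (fun z => (A - z • (1 : Matrix (Fin N) (Fin N) K)).det)).prod := by
  induction μ using Multiset.induction_on with
  | empty => simp
  | cons z μ ih =>
    rw [Multiset.map_cons, Multiset.prod_cons, _root_.map_mul, Matrix.det_mul, ih,
      Multiset.map_cons, Multiset.prod_cons]
    congr 2
    rw [_root_.map_sub, Polynomial.aeval_X, Polynomial.aeval_C, Algebra.algebraMap_eq_smul_one]

lemma my_det_pow_sub_smul [IsAlgClosed K] (A : Matrix (Fin N) (Fin N) K) {q : ℕ} (hq : q ≠ 0)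
    (μ : K) :
    (A ^ q - μ • (1 : Matrix (Fin N) (Fin N) K)).det
      = (((Polynomial.X ^ q - Polynomial.C μ : Polynomial K).roots).map
          (fun z => (A - z • (1 : Matrix (Fin N) (Fin N) K)).det)).prod := by
  have hmonic : (Polynomial.X ^ q - Polynomial.C μ : Polynomial K).Monic := Polynomial.monic_X_pow_sub_C μ hq
  have hfact := Polynomial.Splits.eq_prod_roots_of_monic
    (IsAlgClosed.splits (Polynomial.X ^ q - Polynomial.C μ)) hmonic
  have h2 : A ^ q - μ • (1 : Matrix (Fin N) (Fin N) K)
      = (Polynomial.aeval A) (Polynomial.X ^ q - Polynomial.C μ) := by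
    rw [_root_.map_sub, Polynomial.aeval_X_pow, Polynomial.aeval_C, Algebra.algebraMap_eq_smul_one]
  rw [h2]
  conv_lhs => rw [hfact]
  exact my_det_aeval_prod A _

lemma my_charpoly_conj (F A : Matrix (Fin N) (Fin N) K) (hF : IsUnit F.det) :
    (F * A * F⁻¹).charpoly = A.charpoly := by
  have hFinv : F * F⁻¹ = 1 := Matrix.mul_nonsing_inv F hF
  have hC : (F.map Polynomial.C) * (F⁻¹.map Polynomial.C) = 1 := by
    rw [← Matrix.map_mul, hFinv, Matrix.map_one _ (map_zero Polynomial.C) (_root_.map_one Polynomial.C)]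
  have key : Matrix.charmatrix (F * A * F⁻¹)
      = (F.map Polynomial.C) * Matrix.charmatrix A * (F⁻¹.map Polynomial.C) := by
    rw [Matrix.charmatrix, Matrix.charmatrix, Matrix.mul_sub, Matrix.sub_mul]
    congr 1
    · rw [(Matrix.scalar_commute (Polynomial.X : Polynomial K) (fun r => Commute.all _ r) (F.map Polynomial.C)).symm.eq,
        Matrix.mul_assoc, hC, Matrix.mul_one]
    · simp only [RingHom.mapMatrix_apply, ← Matrix.map_mul]
  rw [Matrix.charpoly, Matrix.charpoly, key, Matrix.det_mul, Matrix.det_mul]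
  rw [mul_comm ((F.map Polynomial.C).det), mul_assoc, ← Matrix.det_mul, hC, Matrix.det_one, mul_one]


lemma my_prod_dvd (μ : Multiset K) (g : Polynomial K) (h : ∀ z ∈ μ, Polynomial.X - Polynomial.C z ∣ g) :
    (μ.map fun z => Polynomial.X - Polynomial.C z).prod ∣ g ^ Multiset.card μ := by
  induction μ using Multiset.induction_on with
  | empty => simp
  | cons z μ ih =>
    rw [Multiset.map_cons, Multiset.prod_cons, Multiset.card_cons, pow_succ']
    exact mul_dvd_mul (h z (Multiset.mem_cons_self _ _))
      (ih fun w hw => h w (Multiset.mem_cons_of_mem hw))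

lemma my_iterate_pow (q : ℕ) (z : K) : ∀ i, (fun x : K => x ^ q)^[i] z = z ^ q ^ i := by
  intro i
  induction i with
  | zero => simp
  | succ i ih => rw [Function.iterate_succ_apply', ih, ← pow_mul, pow_succ]

/-- Main field-theoretic lemma. -/
lemma my_field_step [IsAlgClosed K] {q : ℕ} (hq2 : 2 ≤ q) (hN : 1 ≤ N)
    (A F : Matrix (Fin N) (Fin N) K) (hdetA : A.det ≠ 0) (hdetF : IsUnit F.det)
    (hrel : F * A = A ^ q * F) :
    (A ^ (q ^ N.factorial - 1) - 1) ^ N = 0 := by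
  classical
  have hq0 : q ≠ 0 := by omega
  have hconj : A ^ q = F * A * F⁻¹ := by
    rw [hrel, Matrix.mul_assoc, Matrix.mul_nonsing_inv F hdetF, Matrix.mul_one]
  have hcq : (A ^ q).charpoly = A.charpoly := by rw [hconj, my_charpoly_conj F A hdetF]
  have hc0 : A.charpoly ≠ 0 := (Matrix.charpoly_monic A).ne_zero
  have hdict : ∀ (B : Matrix (Fin N) (Fin N) K) (z : K),
      B.charpoly.eval z = 0 ↔ (B - z • (1 : Matrix (Fin N) (Fin N) K)).det = 0 := by
    intro B z
    rw [my_eval_charpoly, ← neg_sub, Matrix.det_neg]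
    constructor
    · intro h
      rcases mul_eq_zero.mp h with h' | h'
      · exact absurd h' (pow_ne_zero _ (by norm_num))
      · exact h'
    · intro h; rw [h, mul_zero]
  set Fs : Finset K := A.charpoly.roots.toFinset with hFs
  have hmemF : ∀ z : K, z ∈ Fs ↔ A.charpoly.eval z = 0 := by
    intro z
    rw [hFs, Multiset.mem_toFinset, Polynomial.mem_roots hc0]
    exact Iff.rfl
  have hmaps : ∀ z ∈ Fs, z ^ q ∈ Fs := by
    intro z hz
    rw [hmemF] at hz ⊢
    rw [← hcq, hdict, my_det_pow_sub_smul A hq0]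
    apply Multiset.prod_eq_zero
    have hzr : z ∈ (Polynomial.X ^ q - Polynomial.C (z ^ q) : Polynomial K).roots := by
      rw [Polynomial.mem_roots ((Polynomial.monic_X_pow_sub_C _ hq0).ne_zero)]
      simp [Polynomial.IsRoot]
    rw [Multiset.mem_map]
    exact ⟨z, hzr, (hdict A z).mp hz⟩
  have hsurj : ∀ μ ∈ Fs, ∃ z ∈ Fs, z ^ q = μ := by
    intro μ hμ
    rw [hmemF] at hμ
    have h1 : (A ^ q).charpoly.eval μ = 0 := by rw [hcq]; exact hμ
    rw [hdict, my_det_pow_sub_smul A hq0] at h1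
    obtain ⟨w, hw1, hw2⟩ := Multiset.mem_map.mp (Multiset.prod_eq_zero_iff.mp h1)
    refine ⟨w, ?_, ?_⟩
    · rw [hmemF, hdict]; exact hw2
    · have h2 := (Polynomial.mem_roots ((Polynomial.monic_X_pow_sub_C _ hq0).ne_zero)).mp hw1
      have h3 : w ^ q - μ = 0 := by simpa [Polynomial.IsRoot] using h2
      exact sub_eq_zero.mp h3
  have hcard : Fs.card ≤ N := by
    calc Fs.card ≤ Multiset.card A.charpoly.roots := Multiset.toFinset_card_le _
      _ ≤ A.charpoly.natDegree := Polynomial.card_roots' _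
      _ = N := by rw [Matrix.charpoly_natDegree_eq_dim, Fintype.card_fin]
  set g : K → K := fun x => x ^ q with hg
  have hinj : ∀ a₁ ∈ Fs, ∀ a₂ ∈ Fs, g a₁ = g a₂ → a₁ = a₂ := by
    intro a₁ h₁ a₂ h₂ h
    exact Finset.inj_on_of_surj_on_of_card_le (fun a _ => g a) (fun a ha => hmaps a ha)
      (fun b hb => by obtain ⟨w, hw, hwq⟩ := hsurj b hb; exact ⟨w, hw, hwq⟩) le_rfl h₁ h₂ h
  have hiterMem : ∀ a ∈ Fs, ∀ i, g^[i] a ∈ Fs := by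
    intro a ha i
    induction i with
    | zero => simpa using ha
    | succ i ih => rw [Function.iterate_succ_apply']; exact hmaps _ ih
  have hcancel : ∀ i, ∀ a ∈ Fs, ∀ b ∈ Fs, g^[i] a = g^[i] b → a = b := by
    intro i
    induction i with
    | zero => intro a _ b _ h; simpa using h
    | succ i ih =>
      intro a ha b hb h
      rw [Function.iterate_succ_apply, Function.iterate_succ_apply] at h
      exact hinj a ha b hb (ih (g a) (hmaps a ha) (g b) (hmaps b hb) h)
  have hper : ∀ z ∈ Fs, ∃ m, 1 ≤ m ∧ m ≤ N ∧ z ^ q ^ m = z := by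
    intro z hz
    obtain ⟨i, hi, j, hj, hne, hij⟩ :=
      Finset.exists_ne_map_eq_of_card_lt_of_maps_to
        (s := Finset.range (N + 1)) (t := Fs)
        (by rw [Finset.card_range]; omega)
        (fun i _ => hiterMem z hz i)
    rw [Finset.mem_range] at hi hj
    rcases Nat.lt_or_ge i j with hlt | hge
    · refine ⟨j - i, by omega, by omega, ?_⟩
      rw [← my_iterate_pow q z (j - i)]
      refine hcancel i _ (hiterMem z hz _) z hz ?_
      rw [← Function.iterate_add_apply]
      have : i + (j - i) = j := by omega
      rw [this]; exact hij.symm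
    · have hlt : j < i := by omega
      refine ⟨i - j, by omega, by omega, ?_⟩
      rw [← my_iterate_pow q z (i - j)]
      refine hcancel j _ (hiterMem z hz _) z hz ?_
      rw [← Function.iterate_add_apply]
      have : j + (i - j) = i := by omega
      rw [this]; exact hij
  -- every root is an Mth root of unity, M = q ^ N! - 1
  set M := q ^ N.factorial - 1 with hM
  have hroot1 : ∀ z ∈ Fs, z ^ M = 1 := by
    intro z hz
    obtain ⟨m, hm1, hmN, hzm⟩ := hper z hz
    have hz0 : z ≠ 0 := by
      intro h0
      apply hdetA
      have h1 := (hmemF z).mp hz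
      rw [h0] at h1
      have h2 := (hdict A 0).mp h1
      simpa using h2
    have hqm1 : 0 < q ^ m := Nat.pow_pos (by omega)
    have hz1 : z ^ (q ^ m - 1) = 1 := by
      have h2 : z ^ (q ^ m - 1) * z = 1 * z := by
        rw [one_mul, ← pow_succ, Nat.sub_add_cancel hqm1, hzm]
      exact mul_right_cancel₀ hz0 h2
    have hdvdM : q ^ m - 1 ∣ M := by
      obtain ⟨t, ht⟩ := Nat.dvd_factorial hm1 hmN
      rw [hM, ht, pow_mul]
      simpa using Nat.sub_dvd_pow_sub_pow (x := q ^ m) (y := 1) (n := t)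
    obtain ⟨s, hs⟩ := hdvdM
    rw [hs, pow_mul, hz1, one_pow]
  -- charpoly divides (Polynomial.X^M - 1)^N
  have hsplit := IsAlgClosed.splits A.charpoly
  have hprod := Polynomial.Splits.eq_prod_roots_of_monic hsplit (Matrix.charpoly_monic A)
  have hcardroots : Multiset.card A.charpoly.roots = N := by
    rw [Polynomial.splits_iff_card_roots.mp hsplit, Matrix.charpoly_natDegree_eq_dim,
      Fintype.card_fin]
  have hdvd : A.charpoly ∣ ((Polynomial.X : Polynomial K) ^ M - 1) ^ N := by
    have hall : ∀ z ∈ A.charpoly.roots, (Polynomial.X : Polynomial K) - Polynomial.C z ∣ (Polynomial.X : Polynomial K) ^ M - 1 := by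
      intro z hzr
      rw [Polynomial.dvd_iff_isRoot]
      have hzF : z ∈ Fs := by rw [hFs, Multiset.mem_toFinset]; exact hzr
      simp [Polynomial.IsRoot, hroot1 z hzF]
    have h := my_prod_dvd A.charpoly.roots ((Polynomial.X : Polynomial K) ^ M - 1) hall
    rw [hcardroots] at h
    conv_lhs => rw [hprod]
    exact h
  obtain ⟨t, ht⟩ := hdvd
  have happ := congrArg (Polynomial.aeval A) ht
  rw [_root_.map_pow, _root_.map_sub, Polynomial.aeval_X_pow, _root_.map_one, _root_.map_mul, Matrix.aeval_self_charpoly,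
    zero_mul] at happ
  exact happ
lemma my_det_map {R S : Type*} [CommRing R] [CommRing S] {m : ℕ} (f : R →+* S)
    (A : Matrix (Fin m) (Fin m) R) : (A.map f).det = f A.det := by
  rw [RingHom.map_det]
  rfl

end MyAux

set_option maxHeartbeats 1000000 in
set_option synthInstance.maxHeartbeats 400000 in
/-- There is a power `ℓ^a` of `ℓ` such that the image of `σ^(ℓ^a)` in
`GL_n(R_{q,n}) = GL_n(S/I)` is unipotent: every entry of `(σ^(ℓ^a) − 1)^n` lies in `I`. -/
theorem statement_10 (p : ℕ) (hp : p.Prime) (hpl : p ≠ l)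
    (r : ℕ) (hr : 1 ≤ r) (hq : q = p ^ r) (hq2 : 2 ≤ q) (hn : 1 ≤ n) :
    ∃ a : ℕ, ∀ i j : Fin n,
      ((sigS (Wk l k) n q ^ (l ^ a) - 1) ^ n) i j ∈ Iideal n q l k := by

  classical
  set M := q ^ n.factorial - 1 with hMdef
  -- the universal relation in S
  have hrelS : frS (Wk l k) n q * sigS (Wk l k) n q
      = sigS (Wk l k) n q ^ q * frS (Wk l k) n q := by
    have hmap : (Ideal.Quotient.mk (relIdeal (Wk l k) n q)).mapMatrix
        (frLoc (Wk l k) n * sigLoc (Wk l k) n - sigLoc (Wk l k) n ^ q * frLoc (Wk l k) n)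
        = frS (Wk l k) n q * sigS (Wk l k) n q - sigS (Wk l k) n q ^ q * frS (Wk l k) n q := by
      rw [_root_.map_sub, _root_.map_mul, _root_.map_mul, _root_.map_pow]
      rfl
    have h0 : frS (Wk l k) n q * sigS (Wk l k) n q
        - sigS (Wk l k) n q ^ q * frS (Wk l k) n q = 0 := by
      rw [← hmap]
      ext i j
      simp only [RingHom.mapMatrix_apply, Matrix.map_apply, Matrix.zero_apply]
      exact Ideal.Quotient.eq_zero_iff_mem.mpr (Ideal.subset_span ⟨i, j, rfl⟩)
    rw [← sub_eq_zero]
    exact h0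
  -- determinants of the universal matrices are units in S
  have hdetLoc : IsUnit (algebraMap (MvPolynomial (MatVar n) (Wk l k)) (LocS (Wk l k) n)
      (detElt (Wk l k) n)) := IsLocalization.Away.algebraMap_isUnit _
  have hdetLoc2 : IsUnit (algebraMap (MvPolynomial (MatVar n) (Wk l k)) (LocS (Wk l k) n)
      ((frPoly (Wk l k) n).det * (sigPoly (Wk l k) n).det)) := hdetLoc
  rw [_root_.map_mul] at hdetLoc2
  have hdet_sigS : IsUnit (sigS (Wk l k) n q).det := by
    have h2 : IsUnit (algebraMap (MvPolynomial (MatVar n) (Wk l k)) (LocS (Wk l k) n)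
        (sigPoly (Wk l k) n).det) := isUnit_of_mul_isUnit_right hdetLoc2
    have h3 : (sigS (Wk l k) n q).det
        = (Ideal.Quotient.mk (relIdeal (Wk l k) n q)) (sigLoc (Wk l k) n).det := by
      rw [sigS]; exact my_det_map _ _
    have h4 : (sigLoc (Wk l k) n).det
        = algebraMap (MvPolynomial (MatVar n) (Wk l k)) (LocS (Wk l k) n)
            (sigPoly (Wk l k) n).det := by
      rw [sigLoc]; exact my_det_map _ _
    rw [h3, h4]
    exact h2.map _
  have hdet_frS : IsUnit (frS (Wk l k) n q).det := by
    have h2 : IsUnit (algebraMap (MvPolynomial (MatVar n) (Wk l k)) (LocS (Wk l k) n)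
        (frPoly (Wk l k) n).det) := isUnit_of_mul_isUnit_left hdetLoc2
    have h3 : (frS (Wk l k) n q).det
        = (Ideal.Quotient.mk (relIdeal (Wk l k) n q)) (frLoc (Wk l k) n).det := by
      rw [frS]; exact my_det_map _ _
    have h4 : (frLoc (Wk l k) n).det
        = algebraMap (MvPolynomial (MatVar n) (Wk l k)) (LocS (Wk l k) n)
            (frPoly (Wk l k) n).det := by
      rw [frLoc]; exact my_det_map _ _
    rw [h3, h4]
    exact h2.map _
  -- entries of (σ^M − 1)^n lie in every prime of S
  have hMent : ∀ P : PrimeSpectrum (Sring (Wk l k) n q), ∀ i j : Fin n,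
      ((sigS (Wk l k) n q ^ M - 1) ^ n) i j ∈ P.asIdeal := by
    intro P i j
    haveI := P.2
    let D := Sring (Wk l k) n q ⧸ P.asIdeal
    let κ := FractionRing D
    let Ω := AlgebraicClosure κ
    let φ : Sring (Wk l k) n q →+* Ω :=
      ((algebraMap κ Ω).comp (algebraMap D κ)).comp (Ideal.Quotient.mk P.asIdeal)
    have hinj : ∀ x, φ x = 0 → x ∈ P.asIdeal := by
      intro x hx
      have h1 : algebraMap κ Ω ((algebraMap D κ) ((Ideal.Quotient.mk P.asIdeal) x)) = 0 := hx
      have h2 : (algebraMap D κ) ((Ideal.Quotient.mk P.asIdeal) x) = 0 := by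
        apply (algebraMap κ Ω).injective
        rw [h1, _root_.map_zero]
      have h3 : (Ideal.Quotient.mk P.asIdeal) x = 0 := by
        apply IsFractionRing.injective D κ
        rw [h2, _root_.map_zero]
      exact Ideal.Quotient.eq_zero_iff_mem.mp h3
    have hFA : φ.mapMatrix (frS (Wk l k) n q) * φ.mapMatrix (sigS (Wk l k) n q)
        = φ.mapMatrix (sigS (Wk l k) n q) ^ q * φ.mapMatrix (frS (Wk l k) n q) := by
      have hc := congrArg (φ.mapMatrix) hrelS
      rw [_root_.map_mul, _root_.map_mul, _root_.map_pow] at hc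
      exact hc
    have hdA : (φ.mapMatrix (sigS (Wk l k) n q)).det ≠ 0 := by
      have h5 : (φ.mapMatrix (sigS (Wk l k) n q)).det = φ (sigS (Wk l k) n q).det :=
        (RingHom.map_det _ _).symm
      rw [h5]
      exact (hdet_sigS.map φ).ne_zero
    have hdF : IsUnit (φ.mapMatrix (frS (Wk l k) n q)).det := by
      have h5 : (φ.mapMatrix (frS (Wk l k) n q)).det = φ (frS (Wk l k) n q).det :=
        (RingHom.map_det _ _).symm
      rw [h5]
      exact hdet_frS.map φ
    have hfield := my_field_step (q := q) hq2 hn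
      (φ.mapMatrix (sigS (Wk l k) n q)) (φ.mapMatrix (frS (Wk l k) n q)) hdA hdF hFA
    have hzero : φ.mapMatrix ((sigS (Wk l k) n q ^ M - 1) ^ n) = 0 := by
      rw [_root_.map_pow, _root_.map_sub, _root_.map_pow, _root_.map_one]
      exact hfield
    apply hinj
    calc φ (((sigS (Wk l k) n q ^ M - 1) ^ n) i j)
        = (φ.mapMatrix ((sigS (Wk l k) n q ^ M - 1) ^ n)) i j := rfl
      _ = (0 : Matrix (Fin n) (Fin n) Ω) i j := by rw [hzero]
      _ = 0 := rfl
  have hIdef : Iideal n q l k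
      = ⨅ (P : PrimeSpectrum (Sring (Wk l k) n q)) (_ : P ∈ Xcomp n q l k), P.asIdeal := rfl
  have hMI : ∀ i j : Fin n, ((sigS (Wk l k) n q ^ M - 1) ^ n) i j ∈ Iideal n q l k := by
    intro i j
    rw [hIdef]
    exact Ideal.mem_iInf.mpr fun P => Ideal.mem_iInf.mpr fun _ => hMent P i j
  -- set up the reduced quotient R = S/I
  set I := Iideal n q l k with hI
  set cexp := M.factorization l with hcexp
  set M' := M / l ^ cexp with hM'
  have hq1 : 2 ≤ q ^ n.factorial := le_trans hq2 (Nat.le_self_pow (Nat.factorial_ne_zero n) q)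
  have hM0 : M ≠ 0 := by omega
  have hfact : l ^ cexp * M' = M := Nat.ordProj_mul_ordCompl_eq_self M l
  have hndvd : ¬ l ∣ M' := Nat.not_dvd_ordCompl Fact.out hM0
  have hMkUnit : IsUnit ((M' : Wk l k)) := by
    apply WittVector.isUnit_of_coeff_zero_ne_zero
    have hcc : ((M' : Wk l k)).coeff 0 = ((M' : k)) := by
      have h6 := _root_.map_natCast (WittVector.constantCoeff : Wk l k →+* k) M'
      rw [WittVector.constantCoeff_apply] at h6
      exact h6
    rw [hcc]
    intro h0
    exact hndvd ((CharP.cast_eq_zero_iff k l M').mp h0)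
  have hMRUnit : IsUnit ((M' : Sring (Wk l k) n q ⧸ I)) := by
    let χ : Wk l k →+* Sring (Wk l k) n q ⧸ I :=
      (Ideal.Quotient.mk I).comp (algebraMap (Wk l k) (Sring (Wk l k) n q))
    have h7 : ((M' : Sring (Wk l k) n q ⧸ I)) = χ ((M' : Wk l k)) := by
      rw [_root_.map_natCast]
    rw [h7]
    exact hMkUnit.map χ
  -- the matrix τ = image of σ^{ℓ^c} in M_n(S/I)
  set τ : Matrix (Fin n) (Fin n) (Sring (Wk l k) n q ⧸ I) :=
    (Ideal.Quotient.mk I).mapMatrix (sigS (Wk l k) n q ^ l ^ cexp) with hτ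
  have hτM : (τ ^ M' - 1) ^ n = 0 := by
    have h1 : τ ^ M' = (Ideal.Quotient.mk I).mapMatrix (sigS (Wk l k) n q ^ M) := by
      rw [hτ, ← _root_.map_pow, ← pow_mul, hfact]
    have h2 : (Ideal.Quotient.mk I).mapMatrix ((sigS (Wk l k) n q ^ M - 1) ^ n) = 0 := by
      ext i j
      simp only [RingHom.mapMatrix_apply, Matrix.map_apply, Matrix.zero_apply]
      exact Ideal.Quotient.eq_zero_iff_mem.mpr (hMI i j)
    calc (τ ^ M' - 1) ^ n
        = (Ideal.Quotient.mk I).mapMatrix ((sigS (Wk l k) n q ^ M - 1) ^ n) := by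
          rw [_root_.map_pow, _root_.map_sub, _root_.map_one, ← h1]
      _ = 0 := h2
  -- Bezout argument in (S/I)[X]
  set U : Polynomial (Sring (Wk l k) n q ⧸ I) := Polynomial.X - 1 with hU
  set Sp : Polynomial (Sring (Wk l k) n q ⧸ I) :=
    ∑ i ∈ Finset.range M', Polynomial.X ^ i with hSp
  set H : Polynomial (Sring (Wk l k) n q ⧸ I) := Sp ^ n with hH
  have hUH : U ^ n * H
      = ((Polynomial.X : Polynomial (Sring (Wk l k) n q ⧸ I)) ^ M' - 1) ^ n := by
    rw [hH, hU, hSp, ← mul_pow, mul_comm, geom_sum_mul]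
  have hevalH : H.eval 1 = ((M' : Sring (Wk l k) n q ⧸ I)) ^ n := by
    rw [hH, Polynomial.eval_pow]
    congr 1
    rw [hSp, Polynomial.eval_finset_sum]
    simp
  have hspan : (1 : Polynomial (Sring (Wk l k) n q ⧸ I)) ∈ Ideal.span {U, H} := by
    obtain ⟨V, hV⟩ := Polynomial.X_sub_C_dvd_sub_C_eval
      (a := (1 : Sring (Wk l k) n q ⧸ I)) (p := H)
    have hXC : (Polynomial.X - Polynomial.C 1 : Polynomial (Sring (Wk l k) n q ⧸ I)) = U := by
      rw [hU, Polynomial.C_1]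
    rw [hXC] at hV
    have hCm : (Polynomial.C (H.eval 1)) = H - U * V := by linear_combination -hV
    have hunit : IsUnit (Polynomial.C (H.eval 1)) := by
      rw [hevalH]
      exact Polynomial.isUnit_C.mpr (hMRUnit.pow n)
    have hmem : Polynomial.C (H.eval 1) ∈ Ideal.span {U, H} := by
      rw [hCm]
      exact Ideal.sub_mem _ (Ideal.subset_span (by simp))
        (Ideal.mul_mem_right _ _ (Ideal.subset_span (by simp)))
    have htop := Ideal.eq_top_of_isUnit_mem _ hmem hunit
    rw [htop]
    exact Submodule.mem_top
  have hspan2 : (1 : Polynomial (Sring (Wk l k) n q ⧸ I)) ∈ Ideal.span {U ^ n, H} := by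
    have hrad : Ideal.span {U, H} ≤ (Ideal.span {U ^ n, H}).radical := by
      rw [Ideal.span_le]
      intro x hx
      simp only [Set.mem_insert_iff, Set.mem_singleton_iff] at hx
      rcases hx with rfl | rfl
      · exact ⟨n, Ideal.subset_span (by simp)⟩
      · exact Ideal.le_radical (Ideal.subset_span (by simp))
    obtain ⟨m, hm⟩ := hrad hspan
    simpa using hm
  obtain ⟨Ap, Bp, hAB⟩ := Ideal.mem_span_pair.mp hspan2
  -- evaluate at τ
  set u : Matrix (Fin n) (Fin n) (Sring (Wk l k) n q ⧸ I) := τ - 1 with hu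
  have hψU : Polynomial.aeval τ U = u := by
    rw [hU, hu, _root_.map_sub, Polynomial.aeval_X, _root_.map_one]
  have hG0 : Polynomial.aeval τ (U ^ n * H) = 0 := by
    rw [hUH, _root_.map_pow, _root_.map_sub, Polynomial.aeval_X_pow, _root_.map_one]
    exact hτM
  set e : Matrix (Fin n) (Fin n) (Sring (Wk l k) n q ⧸ I) :=
    Polynomial.aeval τ (Bp * H) with he
  have h1e : Polynomial.aeval τ (Ap * U ^ n) + e = 1 := by
    rw [he, ← _root_.map_add, hAB, _root_.map_one]
  have hee : e * e = e := by
    have hpoly : (Bp * H) * (Bp * H) = Bp * H + (-(Ap * Bp)) * (U ^ n * H) := by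
      linear_combination (Bp * H) * hAB
    have h15 : e * e = Polynomial.aeval τ ((Bp * H) * (Bp * H)) := by
      rw [_root_.map_mul, ← he]
    rw [h15, hpoly, _root_.map_add, ← he]
    have h16 : Polynomial.aeval τ ((-(Ap * Bp)) * (U ^ n * H))
        = Polynomial.aeval τ (-(Ap * Bp)) * Polynomial.aeval τ (U ^ n * H) := _root_.map_mul _ _ _
    rw [h16, hG0, mul_zero, add_zero]
  have hue : u ^ n * e = 0 := by
    have h17 : u ^ n * e = Polynomial.aeval τ (U ^ n * (Bp * H)) := by
      rw [_root_.map_mul, _root_.map_pow, hψU, ← he]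
    have hpoly2 : U ^ n * (Bp * H) = Bp * (U ^ n * H) := by ring
    rw [h17, hpoly2]
    have h18 : Polynomial.aeval τ (Bp * (U ^ n * H))
        = Polynomial.aeval τ Bp * Polynomial.aeval τ (U ^ n * H) := _root_.map_mul _ _ _
    rw [h18, hG0, mul_zero]
  -- the evaluation S/I → k
  have hIle : I ≤ RingHom.ker (evalS n q l k) := by
    intro a ha
    rw [hIdef] at ha
    exact Ideal.mem_iInf.mp (Ideal.mem_iInf.mp ha (x0 n q l k)) mem_connectedComponent
  let evB : Sring (Wk l k) n q ⧸ I →+* k :=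
    Ideal.Quotient.lift I (evalS n q l k) (fun a ha => RingHom.mem_ker.mp (hIle ha))
  have hevπ : ∀ x, evB (Ideal.Quotient.mk I x) = evalS n q l k x :=
    fun x => Ideal.Quotient.lift_mk _ _ _
  have hsigev : (sigS (Wk l k) n q).map (evalS n q l k) = 1 := by
    rw [sigS]; erw [Matrix.map_map]
    have hcomp : (⇑(evalS n q l k)) ∘ (⇑(Ideal.Quotient.mk (relIdeal (Wk l k) n q)))
        = evalLoc n l k := funext fun x => Ideal.Quotient.lift_mk _ _ _
    rw [hcomp, sigLoc, Matrix.map_map]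
    have hcomp2 : (⇑(evalLoc n l k))
        ∘ (⇑(algebraMap (MvPolynomial (MatVar n) (Wk l k)) (LocS (Wk l k) n)))
        = evalPoly n l k := funext fun x => evalLoc_algebraMap n l k x
    rw [hcomp2]
    exact sigPoly_eval n l k
  have hτev : evB.mapMatrix τ = 1 := by
    rw [hτ]
    have h8 : evB.mapMatrix ((Ideal.Quotient.mk I).mapMatrix (sigS (Wk l k) n q ^ l ^ cexp))
        = (evalS n q l k).mapMatrix (sigS (Wk l k) n q ^ l ^ cexp) := by
      ext i j
      simp only [RingHom.mapMatrix_apply, Matrix.map_apply]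
      exact hevπ _
    rw [h8, _root_.map_pow, RingHom.mapMatrix_apply, hsigev, one_pow]
  have heev : evB.mapMatrix e = 1 := by
    have h3 : Polynomial.aeval τ (Ap * U ^ n) = Polynomial.aeval τ Ap * u ^ n := by
      rw [_root_.map_mul, _root_.map_pow, hψU]
    have h2 : e = 1 - Polynomial.aeval τ Ap * u ^ n := by
      rw [← h3, ← h1e]
      exact (add_sub_cancel_left _ _).symm
    rw [h2, _root_.map_sub, _root_.map_one, _root_.map_mul, _root_.map_pow]
    have hu0 : evB.mapMatrix u = 0 := by
      rw [hu, _root_.map_sub, _root_.map_one, hτev, sub_self]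
    rw [hu0, zero_pow (by omega : n ≠ 0), mul_zero, sub_zero]
  -- the idempotent determinant
  set d : Sring (Wk l k) n q ⧸ I := e.det with hd
  have hdd : d * d = d := by rw [hd, ← Matrix.det_mul, hee]
  obtain ⟨d', hd'⟩ := Ideal.Quotient.mk_surjective (I := I) d
  have hd'mul : d' * (1 - d') ∈ I := by
    have h9 : Ideal.Quotient.mk I (d' * (1 - d')) = 0 := by
      rw [_root_.map_mul, _root_.map_sub, _root_.map_one, hd']
      have h10 : d * (1 - d) = d - d * d := by ring
      rw [h10, hdd, sub_self]
    exact Ideal.Quotient.eq_zero_iff_mem.mp h9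
  have hdev : evalS n q l k d' = 1 := by
    have h1 : evalS n q l k d' = evB d := by rw [← hd']; exact (hevπ d').symm
    rw [h1, hd, RingHom.map_det, heev, Matrix.det_one]
  -- connectedness: X⁰ ⊆ V(1 - d')
  have hXsub : Xcomp n q l k ⊆ PrimeSpectrum.zeroLocus {1 - d'} := by
    by_contra hcon
    rw [Set.not_subset] at hcon
    obtain ⟨P, hP, hPnot⟩ := hcon
    have hpre : IsPreconnected (Xcomp n q l k) := isPreconnected_connectedComponent
    have hcover : Xcomp n q l k ⊆ (PrimeSpectrum.zeroLocus {d'})ᶜ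
        ∪ (PrimeSpectrum.zeroLocus {1 - d'})ᶜ := by
      intro Q hQ
      by_contra hboth
      rw [Set.mem_union, not_or] at hboth
      obtain ⟨h1, h2⟩ := hboth
      have hd'Q : d' ∈ Q.asIdeal := by
        have h11 : Q ∈ PrimeSpectrum.zeroLocus {d'} := not_not.mp (by simpa using h1)
        simpa [PrimeSpectrum.mem_zeroLocus] using h11
      have h1d'Q : 1 - d' ∈ Q.asIdeal := by
        have h11 : Q ∈ PrimeSpectrum.zeroLocus {1 - d'} := not_not.mp (by simpa using h2)
        simpa [PrimeSpectrum.mem_zeroLocus] using h11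
      have hone : (1 : Sring (Wk l k) n q) ∈ Q.asIdeal := by
        have h12 := Q.asIdeal.add_mem hd'Q h1d'Q
        simpa using h12
      exact Q.2.ne_top ((Ideal.eq_top_iff_one _).mpr hone)
    have hne1 : (Xcomp n q l k ∩ (PrimeSpectrum.zeroLocus {d'})ᶜ).Nonempty := by
      refine ⟨x0 n q l k, mem_connectedComponent, ?_⟩
      simp only [Set.mem_compl_iff, PrimeSpectrum.mem_zeroLocus, Set.singleton_subset_iff]
      intro hmem
      have h13 : evalS n q l k d' = 0 := RingHom.mem_ker.mp hmem
      rw [hdev] at h13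
      exact one_ne_zero h13
    have hne2 : (Xcomp n q l k ∩ (PrimeSpectrum.zeroLocus {1 - d'})ᶜ).Nonempty := by
      refine ⟨P, hP, ?_⟩
      simpa using hPnot
    obtain ⟨Q, hQX, hQu, hQv⟩ := hpre _ _
      ((PrimeSpectrum.isClosed_zeroLocus _).isOpen_compl)
      ((PrimeSpectrum.isClosed_zeroLocus _).isOpen_compl) hcover hne1 hne2
    have hIQ : d' * (1 - d') ∈ Q.asIdeal := by
      have hle : I ≤ Q.asIdeal := by
        intro a ha
        rw [hIdef] at ha
        exact Ideal.mem_iInf.mp (Ideal.mem_iInf.mp ha Q) hQX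
      exact hle hd'mul
    rcases Q.2.mem_or_mem hIQ with hc | hc
    · exact hQu (by simpa [PrimeSpectrum.mem_zeroLocus] using hc)
    · exact hQv (by simpa [PrimeSpectrum.mem_zeroLocus] using hc)
  have h1d'I : 1 - d' ∈ I := by
    rw [hIdef]
    refine Ideal.mem_iInf.mpr fun P => Ideal.mem_iInf.mpr fun hP => ?_
    have h14 := hXsub hP
    simpa [PrimeSpectrum.mem_zeroLocus] using h14
  have hd1 : d = 1 := by
    have h0 : Ideal.Quotient.mk I (1 - d') = 0 := Ideal.Quotient.eq_zero_iff_mem.mpr h1d'I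
    rw [_root_.map_sub, _root_.map_one, hd'] at h0
    exact (sub_eq_zero.mp h0).symm
  have hunit_e : IsUnit e := (Matrix.isUnit_iff_isUnit_det e).mpr (by
    rw [← hd, hd1]; exact isUnit_one)
  have he1 : e = 1 := hunit_e.mul_left_cancel (by rw [hee, mul_one])
  have hun : u ^ n = 0 := by rw [← hue, he1, mul_one]
  refine ⟨cexp, fun i j => ?_⟩
  have hfin : (Ideal.Quotient.mk I).mapMatrix ((sigS (Wk l k) n q ^ l ^ cexp - 1) ^ n) = 0 := by
    rw [_root_.map_pow, _root_.map_sub, _root_.map_one, ← hτ, ← hu]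
    exact hun
  have hentry : Ideal.Quotient.mk I (((sigS (Wk l k) n q ^ l ^ cexp - 1) ^ n) i j) = 0 := by
    calc Ideal.Quotient.mk I (((sigS (Wk l k) n q ^ l ^ cexp - 1) ^ n) i j)
        = ((Ideal.Quotient.mk I).mapMatrix ((sigS (Wk l k) n q ^ l ^ cexp - 1) ^ n)) i j := rfl
      _ = (0 : Matrix (Fin n) (Fin n) (Sring (Wk l k) n q ⧸ I)) i j := by rw [hfin]
      _ = 0 := rfl
  exact Ideal.Quotient.eq_zero_iff_mem.mp hentry


end
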